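/- Let φ be a faithful normal state on a von Neumann algebra M acting on a complex Hilbert space H, and let a be a hermitian sesquilinear form on D_φ satisfying: there is a constant c ∈ ℂ such that for every representation (f_i)_{i∈I} of φ, the family (a(f_i, f_i))_{i∈I} is absolutely summable with sum c. Suppose (g_i)_{i∈I}, (h_j)_{j∈J}, (l_k)_{k∈K} are families of vectors of H such that for every x ∈ M⁺ the families (⟨x g_i, g_i⟩)_{i∈I}, (⟨x h_j, h_j⟩)_{j∈J}, (⟨x l_k, l_k⟩)_{k∈K} are summable and Σ_{i∈I} ⟨x g_i, g_i⟩ + Σ_{k∈K} ⟨x l_k, l_k⟩ = φ(x) = Σ_{j∈J} ⟨x h_j, h_j⟩ + Σ_{k∈K} ⟨x l_k, l_k⟩. Then all g_i, h_j, l_k belong to D_φ, the families (a(g_i, g_i))_{i∈I} and (a(h_j, h_j))_{j∈J} are absolutely summable, and Σ_{i∈I} a(g_i, g_i) = Σ_{j∈J} a(h_j, h_j). -/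

import Mathlib

open scoped ComplexOrder
open Filter Topology

noncomputable section

namespace VNState

variable {H : Type*} [NormedAddCommGroup H] [InnerProductSpace ℂ H] [CompleteSpace H]
  {M : VonNeumannAlgebra H}

/-- An element of a von Neumann algebra `M` (viewed as the subtype of `B(H)` given by
its underlying star subalgebra) belongs to `M⁺` if it is positive as an operator. -/
def IsPos (x : ↥M.toStarSubalgebra) : Prop :=
  (x : H →L[ℂ] H).IsPositive

/-- A linear functional `φ` on `M` is a state if it is positive and `φ(1) = 1`. -/
def IsState (φ : ↥M.toStarSubalgebra →ₗ[ℂ] ℂ) : Prop :=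
  (∀ x : ↥M.toStarSubalgebra, IsPos x → 0 ≤ φ x) ∧ φ 1 = 1

/-- A state `φ` is faithful if `x ∈ M⁺` and `φ(x) = 0` imply `x = 0`. -/
def IsFaithful (φ : ↥M.toStarSubalgebra →ₗ[ℂ] ℂ) : Prop :=
  ∀ x : ↥M.toStarSubalgebra, IsPos x → φ x = 0 → x = 0

/-- A representation of `φ`: a family `(f_i)` of vectors of `H` such that for every
`x ∈ M⁺` the family `(⟨x f_i, f_i⟩)` is summable with sum `φ(x)`. A functional is
normal iff it admits at least one representation. -/
def IsRepresentation (φ : ↥M.toStarSubalgebra →ₗ[ℂ] ℂ) {I : Type*} (f : I → H) : Prop :=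
  ∀ x : ↥M.toStarSubalgebra, IsPos x →
    HasSum (fun i => (inner ℂ ((x : H →L[ℂ] H) (f i)) (f i) : ℂ)) (φ x)

/-- The lineal of `φ`: `D_φ = {f ∈ H : ∃ λ > 0, ⟨x f, f⟩ ≤ λ φ(x) for all x ∈ M⁺}`. -/
def lineal (φ : ↥M.toStarSubalgebra →ₗ[ℂ] ℂ) : Set H :=
  {f | ∃ l : ℝ, 0 < l ∧ ∀ x : ↥M.toStarSubalgebra, IsPos x →
    (inner ℂ ((x : H →L[ℂ] H) f) f : ℂ) ≤ (l : ℂ) * φ x}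

/-- The norm `‖x‖_φ = inf {Re φ(x₁ + x₂) : x = x₁ − x₂, x₁, x₂ ∈ M⁺}` on `M^sa`. -/
def stateNorm (φ : ↥M.toStarSubalgebra →ₗ[ℂ] ℂ) (x : ↥M.toStarSubalgebra) : ℝ :=
  sInf {r : ℝ | ∃ x₁ x₂ : ↥M.toStarSubalgebra, IsPos x₁ ∧ IsPos x₂ ∧
    x = x₁ - x₂ ∧ r = (φ (x₁ + x₂)).re}

/-- A hermitian sesquilinear form on a subset `D` of `H`: linear in the first
argument, conjugate-linear in the second, with `a(g,f) = conj (a(f,g))`. -/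
structure IsHermitianSesqOn (D : Set H) (a : H → H → ℂ) : Prop where
  add_left : ∀ f₁ f₂ g : H, f₁ ∈ D → f₂ ∈ D → g ∈ D →
    a (f₁ + f₂) g = a f₁ g + a f₂ g
  smul_left : ∀ (c : ℂ) (f g : H), f ∈ D → g ∈ D → a (c • f) g = c * a f g
  add_right : ∀ f g₁ g₂ : H, f ∈ D → g₁ ∈ D → g₂ ∈ D →
    a f (g₁ + g₂) = a f g₁ + a f g₂
  smul_right : ∀ (c : ℂ) (f g : H), f ∈ D → g ∈ D →
    a f (c • g) = starRingEnd ℂ c * a f g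
  hermitian : ∀ f g : H, f ∈ D → g ∈ D → a g f = starRingEnd ℂ (a f g)

end VNState

open VNState

universe uu

private lemma exists_reindex' {H : Type*} [AddCommGroup H]
    {X : Type*} (f : X → H) (hcount : (Function.support f).Countable) :
    ∃ F : ULift.{uu} ℕ → H,
      ∀ {α : Type*} [AddCommMonoid α] [TopologicalSpace α] (t : H → α), t 0 = 0 →
        ∀ s : α, (HasSum (fun n => t (F n)) s ↔ HasSum (fun x => t (f x)) s) := by
  obtain ⟨ι, hι⟩ := Set.countable_iff_exists_injective.mp hcount
  set emb : ↥(Function.support f) → ULift.{uu} ℕ := fun s => ⟨ι s⟩ with hembdef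
  have hemb : Function.Injective emb := by
    intro s t hst
    apply hι
    simpa [hembdef, ULift.ext_iff] using hst
  set F : ULift.{uu} ℕ → H := Function.extend emb (fun s => f ↑s) 0 with hFdef
  have hext : ∀ s', F (emb s') = f ↑s' := fun s' => hemb.extend_apply _ _ _
  have hzero : ∀ n ∉ Set.range emb, F n = 0 := by
    intro n hn
    rw [hFdef, Function.extend_apply']
    · rfl
    · rintro ⟨a, haa⟩; exact hn ⟨a, haa⟩
  refine ⟨F, ?_⟩
  intro α _ _ t ht s
  have h1 : HasSum ((fun n => t (F n)) ∘ emb) s ↔ HasSum (fun n => t (F n)) s :=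
    hemb.hasSum_iff (fun n hn => by simp only [hzero n hn]; exact ht)
  have h2 : ((fun n => t (F n)) ∘ emb) = fun s' : ↥(Function.support f) => t (f ↑s') :=
    funext fun s' => by simp [Function.comp, hext]
  have hsupp : Function.support (fun x => t (f x)) ⊆ Function.support f := by
    intro x hx
    simp only [Function.mem_support] at hx ⊢
    intro h0
    exact hx (by rw [h0, ht])
  have h3 : HasSum ((fun x => t (f x)) ∘ ((↑) : ↥(Function.support f) → X)) s
      ↔ HasSum (fun x => t (f x)) s := hasSum_subtype_iff_of_support_subset hsupp
  rw [← h1, h2]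
  exact h3

private lemma abs_sum_invariant {H : Type*} [NormedAddCommGroup H] [InnerProductSpace ℂ H]
    [CompleteSpace H] {M : VonNeumannAlgebra H}
    (φ : ↥M.toStarSubalgebra →ₗ[ℂ] ℂ)
    (a : H → H → ℂ) (ha00 : a 0 0 = 0) (c : ℂ)
    (hc' : ∀ F : ULift.{uu} ℕ → H, IsRepresentation φ F →
      Summable (fun n => ‖a (F n) (F n)‖) ∧ HasSum (fun n => a (F n) (F n)) c)
    {X : Type*} (f : X → H) (hf : IsRepresentation φ f) :
    Summable (fun p => ‖a (f p) (f p)‖) ∧ HasSum (fun p => a (f p) (f p)) c := by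
  have hone : ((1 : ↥M.toStarSubalgebra) : H →L[ℂ] H) = 1 := rfl
  have h1 : IsPos (1 : ↥M.toStarSubalgebra) := by
    unfold IsPos
    rw [hone]
    exact ContinuousLinearMap.isPositive_one
  have hsum1 := hf 1 h1
  have hcount : (Function.support f).Countable := by
    have hcs := hsum1.summable.countable_support
    refine Set.Countable.mono ?_ hcs
    intro x hx
    simp only [Function.mem_support] at hx ⊢
    rw [hone]
    simpa [ContinuousLinearMap.one_apply, inner_self_eq_zero] using hx
  obtain ⟨F, hF⟩ := exists_reindex' f hcount
  have hFrep : IsRepresentation φ F := fun x hx =>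
    (hF (fun v => (inner ℂ ((x : H →L[ℂ] H) v) v : ℂ)) (by simp) _).mpr (hf x hx)
  obtain ⟨hs, hsum⟩ := hc' F hFrep
  exact ⟨⟨_, (hF (fun v => ‖a v v‖) (by simp [ha00]) _).mp hs.hasSum⟩,
    (hF (fun v => a v v) ha00 _).mp hsum⟩

private lemma hasSum_sum_elim {α I K : Type*} [AddCommMonoid α] [TopologicalSpace α]
    [ContinuousAdd α] {f : I → α} {g : K → α} {a b : α}
    (hf : HasSum f a) (hg : HasSum g b) : HasSum (Sum.elim f g) (a + b) := by
  have h1 : HasSum ((Sum.elim f g) ∘ ((↑) : Set.range (Sum.inl : I → I ⊕ K) → I ⊕ K)) a := by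
    rw [← (Equiv.ofInjective Sum.inl Sum.inl_injective).hasSum_iff]
    exact hf
  have h2 : HasSum ((Sum.elim f g) ∘ ((↑) : Set.range (Sum.inr : K → I ⊕ K) → I ⊕ K)) b := by
    rw [← (Equiv.ofInjective Sum.inr Sum.inr_injective).hasSum_iff]
    exact hg
  exact h1.add_isCompl Set.isCompl_range_inl_range_inr h2

set_option maxHeartbeats 1000000 in
/-- Let `φ` be a faithful normal state on a von Neumann algebra `M`
acting on a complex Hilbert space `H`, and let `a` be a hermitian sesquilinear form on
`D_φ` such that there is a constant `c ∈ ℂ` such that for every representation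
`(f_i)_{i∈I}` of `φ` the family `(a(f_i, f_i))_{i∈I}` is absolutely summable with sum
`c`. Suppose `(g_i)`, `(h_j)`, `(l_k)` are families of vectors of `H` such that for
every `x ∈ M⁺` the families `(⟨x g_i, g_i⟩)`, `(⟨x h_j, h_j⟩)`, `(⟨x l_k, l_k⟩)` are
summable and `Σ ⟨x g_i, g_i⟩ + Σ ⟨x l_k, l_k⟩ = φ(x) = Σ ⟨x h_j, h_j⟩ + Σ ⟨x l_k, l_k⟩`.
Then all `g_i, h_j, l_k` belong to `D_φ`, the families `(a(g_i, g_i))` and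
`(a(h_j, h_j))` are absolutely summable, and `Σ a(g_i, g_i) = Σ a(h_j, h_j)`. -/
theorem statement10 {H : Type*} [NormedAddCommGroup H] [InnerProductSpace ℂ H]
    [CompleteSpace H] {M : VonNeumannAlgebra H}
    (φ : ↥M.toStarSubalgebra →ₗ[ℂ] ℂ) (hstate : IsState φ) (hfaithful : IsFaithful φ)
    {I₀ : Type*} (f₀ : I₀ → H) (hnormal : IsRepresentation φ f₀)
    (a : H → H → ℂ) (ha : IsHermitianSesqOn (lineal φ) a)
    (c : ℂ)
    (hc : ∀ {I : Type*} (f : I → H), IsRepresentation φ f →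
      Summable (fun i => ‖a (f i) (f i)‖) ∧ HasSum (fun i => a (f i) (f i)) c)
    {I J K : Type*} (g : I → H) (h : J → H) (l : K → H)
    (hsum : ∀ x : ↥M.toStarSubalgebra, IsPos x →
      ∃ sg sh sl : ℂ,
        HasSum (fun i => (inner ℂ ((x : H →L[ℂ] H) (g i)) (g i) : ℂ)) sg ∧
        HasSum (fun j => (inner ℂ ((x : H →L[ℂ] H) (h j)) (h j) : ℂ)) sh ∧
        HasSum (fun k => (inner ℂ ((x : H →L[ℂ] H) (l k)) (l k) : ℂ)) sl ∧
        sg + sl = φ x ∧ sh + sl = φ x) :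
    (∀ i, g i ∈ lineal φ) ∧ (∀ j, h j ∈ lineal φ) ∧ (∀ k, l k ∈ lineal φ) ∧
    Summable (fun i => ‖a (g i) (g i)‖) ∧ Summable (fun j => ‖a (h j) (h j)‖) ∧
    ∑' i, a (g i) (g i) = ∑' j, a (h j) (h j) := by
  have hpos : ∀ (x : ↥M.toStarSubalgebra), IsPos x → ∀ v : H,
      (0 : ℂ) ≤ (inner ℂ ((x : H →L[ℂ] H) v) v : ℂ) := by
    intro x hx v
    obtain ⟨heq, hre⟩ := (ContinuousLinearMap.isPositive_iff_complex (x : H →L[ℂ] H)).mp hx v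
    rw [← heq]
    exact_mod_cast hre
  -- the combined families are representations of φ
  have hrepGL : IsRepresentation φ (Sum.elim g l) := by
    intro x hx
    obtain ⟨sg, sh, sl, hg, hh, hl, e1, e2⟩ := hsum x hx
    have : (fun p : I ⊕ K => (inner ℂ ((x : H →L[ℂ] H) (Sum.elim g l p)) (Sum.elim g l p) : ℂ))
        = Sum.elim (fun i => (inner ℂ ((x : H →L[ℂ] H) (g i)) (g i) : ℂ))
            (fun k => (inner ℂ ((x : H →L[ℂ] H) (l k)) (l k) : ℂ)) := by
      funext p; cases p <;> rfl
    rw [this, ← e1]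
    exact hasSum_sum_elim hg hl
  have hrepHL : IsRepresentation φ (Sum.elim h l) := by
    intro x hx
    obtain ⟨sg, sh, sl, hg, hh, hl, e1, e2⟩ := hsum x hx
    have : (fun p : J ⊕ K => (inner ℂ ((x : H →L[ℂ] H) (Sum.elim h l p)) (Sum.elim h l p) : ℂ))
        = Sum.elim (fun j => (inner ℂ ((x : H →L[ℂ] H) (h j)) (h j) : ℂ))
            (fun k => (inner ℂ ((x : H →L[ℂ] H) (l k)) (l k) : ℂ)) := by
      funext p; cases p <;> rfl
    rw [this, ← e2]
    exact hasSum_sum_elim hh hl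
  have h0mem : (0 : H) ∈ lineal φ := by
    refine ⟨1, one_pos, fun x hx => ?_⟩
    simp only [map_zero, inner_zero_right, Complex.ofReal_one, one_mul]
    exact hstate.1 x hx
  have ha00 : a 0 0 = 0 := by
    have h := ha.smul_left 0 0 0 h0mem h0mem
    simpa using h
  obtain ⟨hsumGL, hGLc⟩ :=
    abs_sum_invariant φ a ha00 c (fun F hF => hc F hF) (Sum.elim g l) hrepGL
  obtain ⟨hsumHL, hHLc⟩ :=
    abs_sum_invariant φ a ha00 c (fun F hF => hc F hF) (Sum.elim h l) hrepHL
  -- summability of the sub-families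
  have hSg : Summable (fun i => ‖a (g i) (g i)‖) := by
    have hcomp : Summable ((fun p : I ⊕ K => ‖a (Sum.elim g l p) (Sum.elim g l p)‖) ∘ Sum.inl) :=
      hsumGL.comp_injective Sum.inl_injective
    exact hcomp
  have hSh : Summable (fun j => ‖a (h j) (h j)‖) := by
    have hcomp : Summable ((fun p : J ⊕ K => ‖a (Sum.elim h l p) (Sum.elim h l p)‖) ∘ Sum.inl) :=
      hsumHL.comp_injective Sum.inl_injective
    exact hcomp
  have hSl : Summable (fun k => ‖a (l k) (l k)‖) := by
    have hcomp : Summable ((fun p : I ⊕ K => ‖a (Sum.elim g l p) (Sum.elim g l p)‖) ∘ Sum.inr) :=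
      hsumGL.comp_injective Sum.inr_injective
    exact hcomp
  have hSg' : Summable (fun i => a (g i) (g i)) := hSg.of_norm
  have hSh' : Summable (fun j => a (h j) (h j)) := hSh.of_norm
  have hSl' : Summable (fun k => a (l k) (l k)) := hSl.of_norm
  -- split the sums
  have hGLsplit : (∑' i, a (g i) (g i)) + (∑' k, a (l k) (l k)) = c := by
    have h1 : HasSum (Sum.elim (fun i => a (g i) (g i)) (fun k => a (l k) (l k)))
        ((∑' i, a (g i) (g i)) + (∑' k, a (l k) (l k))) :=
      hasSum_sum_elim hSg'.hasSum hSl'.hasSum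
    have h2 : (fun p : I ⊕ K => a (Sum.elim g l p) (Sum.elim g l p))
        = Sum.elim (fun i => a (g i) (g i)) (fun k => a (l k) (l k)) := by
      funext p; cases p <;> rfl
    rw [h2] at hGLc
    exact h1.unique hGLc
  have hHLsplit : (∑' j, a (h j) (h j)) + (∑' k, a (l k) (l k)) = c := by
    have h1 : HasSum (Sum.elim (fun j => a (h j) (h j)) (fun k => a (l k) (l k)))
        ((∑' j, a (h j) (h j)) + (∑' k, a (l k) (l k))) :=
      hasSum_sum_elim hSh'.hasSum hSl'.hasSum
    have h2 : (fun p : J ⊕ K => a (Sum.elim h l p) (Sum.elim h l p))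
        = Sum.elim (fun j => a (h j) (h j)) (fun k => a (l k) (l k)) := by
      funext p; cases p <;> rfl
    rw [h2] at hHLc
    exact h1.unique hHLc
  refine ⟨?_, ?_, ?_, hSg, hSh, ?_⟩
  · intro i
    refine ⟨1, one_pos, fun x hx => ?_⟩
    obtain ⟨sg, sh, sl, hg, hh, hl, e1, e2⟩ := hsum x hx
    have h1 : (inner ℂ ((x : H →L[ℂ] H) (g i)) (g i) : ℂ) ≤ sg :=
      le_hasSum hg i (fun j _ => hpos x hx (g j))
    have h2 : (0 : ℂ) ≤ sl :=
      hasSum_le (fun k => hpos x hx (l k)) hasSum_zero hl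
    calc (inner ℂ ((x : H →L[ℂ] H) (g i)) (g i) : ℂ) ≤ sg := h1
      _ ≤ sg + sl := le_add_of_nonneg_right h2
      _ = ((1 : ℝ) : ℂ) * φ x := by rw [e1]; norm_num
  · intro j
    refine ⟨1, one_pos, fun x hx => ?_⟩
    obtain ⟨sg, sh, sl, hg, hh, hl, e1, e2⟩ := hsum x hx
    have h1 : (inner ℂ ((x : H →L[ℂ] H) (h j)) (h j) : ℂ) ≤ sh :=
      le_hasSum hh j (fun j' _ => hpos x hx (h j'))
    have h2 : (0 : ℂ) ≤ sl :=
      hasSum_le (fun k => hpos x hx (l k)) hasSum_zero hl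
    calc (inner ℂ ((x : H →L[ℂ] H) (h j)) (h j) : ℂ) ≤ sh := h1
      _ ≤ sh + sl := le_add_of_nonneg_right h2
      _ = ((1 : ℝ) : ℂ) * φ x := by rw [e2]; norm_num
  · intro k
    refine ⟨1, one_pos, fun x hx => ?_⟩
    obtain ⟨sg, sh, sl, hg, hh, hl, e1, e2⟩ := hsum x hx
    have h1 : (inner ℂ ((x : H →L[ℂ] H) (l k)) (l k) : ℂ) ≤ sl :=
      le_hasSum hl k (fun k' _ => hpos x hx (l k'))
    have h2 : (0 : ℂ) ≤ sg :=
      hasSum_le (fun i => hpos x hx (g i)) hasSum_zero hg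
    calc (inner ℂ ((x : H →L[ℂ] H) (l k)) (l k) : ℂ) ≤ sl := h1
      _ ≤ sg + sl := le_add_of_nonneg_left h2
      _ = ((1 : ℝ) : ℂ) * φ x := by rw [e1]; norm_num
  · exact add_right_cancel (hGLsplit.trans hHLsplit.symm)
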